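/- Fold nondegeneracy of the pseudo-arclength system: let F : ℝⁿ × ℝ → ℝⁿ be C¹ with F(u₀,λ₀) = 0, dim ker F_u(u₀,λ₀) = 1, and F_λ(u₀,λ₀) ∉ ran F_u(u₀,λ₀). Let (u̇₀, λ̇₀) ∈ ℝⁿ × ℝ be a tangent vector with λ̇₀ = 0 and u̇₀ spanning ker F_u(u₀,λ₀). Then the (n+1)×(n+1) bordered Jacobian [[F_u, F_λ],[u̇₀ᵀ, λ̇₀]] evaluated at (u₀,λ₀) is nonsingular. -/

import Mathlib

/-- Fold nondegeneracy of the pseudo-arclength system: if `F : ℝⁿ × ℝ → ℝⁿ` is `C¹`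
with `F(u₀,λ₀) = 0`, `dim ker F_u(u₀,λ₀) = 1`, `F_λ(u₀,λ₀) ∉ ran F_u(u₀,λ₀)`, and
`(u̇₀, λ̇₀)` is a tangent vector with `λ̇₀ = 0` and `u̇₀` spanning `ker F_u(u₀,λ₀)`,
then the bordered Jacobian `(h,t) ↦ (F_u h + t F_λ, u̇₀ᵀh + λ̇₀ t)` is nonsingular. -/
theorem fold_bordered_jacobian_nonsingular {n : ℕ}
    (F : (Fin n → ℝ) × ℝ → (Fin n → ℝ)) (u₀ : Fin n → ℝ) (lam₀ : ℝ)
    (hF : ContDiff ℝ 1 F) (h0 : F (u₀, lam₀) = 0)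
    (A : (Fin n → ℝ) →L[ℝ] (Fin n → ℝ)) (b : Fin n → ℝ)
    (hA : HasFDerivAt (fun u => F (u, lam₀)) A u₀)
    (hb : HasDerivAt (fun l => F (u₀, l)) b lam₀)
    (hker : Module.finrank ℝ (LinearMap.ker (A : (Fin n → ℝ) →ₗ[ℝ] (Fin n → ℝ))) = 1)
    (hbnot : b ∉ LinearMap.range (A : (Fin n → ℝ) →ₗ[ℝ] (Fin n → ℝ)))
    (udot₀ : Fin n → ℝ) (lamdot₀ : ℝ)
    (hudot : udot₀ ≠ 0) (hudotker : A udot₀ = 0) (hlamdot : lamdot₀ = 0) :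
    Function.Bijective (fun p : (Fin n → ℝ) × ℝ =>
      ((A p.1 + p.2 • b, (∑ i, udot₀ i * p.1 i) + lamdot₀ * p.2) :
        (Fin n → ℝ) × ℝ)) := by
  subst hlamdot
  set L : ((Fin n → ℝ) × ℝ) →ₗ[ℝ] ((Fin n → ℝ) × ℝ) :=
    { toFun := fun p => (A p.1 + p.2 • b, (∑ i, udot₀ i * p.1 i) + 0 * p.2)
      map_add' := by
        intro p q
        ext i
        · simp [add_smul]; ring
        · simp [mul_add, Finset.sum_add_distrib]
      map_smul' := by
        intro c p
        ext i
        · simp [smul_smul]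
        · simp only [Pi.smul_apply, smul_eq_mul, zero_mul, add_zero, RingHom.id_apply,
            Prod.smul_snd, Prod.mk.injEq, Finset.mul_sum]
          rw [Prod.smul_mk]
          simp only [smul_eq_mul, Finset.mul_sum, zero_mul, add_zero]
          exact Finset.sum_congr rfl (fun i _ => by rw [Pi.smul_apply, smul_eq_mul]; ring) } with hL
  have hinj : Function.Injective L := by
    rw [← LinearMap.ker_eq_bot, LinearMap.ker_eq_bot']
    intro p hp
    have h1 : A p.1 + p.2 • b = 0 := congrArg Prod.fst hp
    have h2 : (∑ i, udot₀ i * p.1 i) + 0 * p.2 = 0 := congrArg Prod.snd hp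
    have ht : p.2 = 0 := by
      by_contra ht
      apply hbnot
      refine ⟨(-p.2⁻¹) • p.1, ?_⟩
      have : A p.1 = -(p.2 • b) := by
        rw [eq_neg_iff_add_eq_zero]; exact h1
      simp [this, smul_smul]
      field_simp
      simp
    have hAp : A p.1 = 0 := by
      have := h1
      rw [ht] at this
      simpa using this
    -- ker A = span {udot₀}
    have hspan : Submodule.span ℝ {udot₀} =
        LinearMap.ker (A : (Fin n → ℝ) →ₗ[ℝ] (Fin n → ℝ)) := by
      apply Submodule.eq_of_le_of_finrank_le
      · rw [Submodule.span_le, Set.singleton_subset_iff]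
        exact hudotker
      · rw [hker, finrank_span_singleton hudot]
    have hp1mem : p.1 ∈ Submodule.span ℝ {udot₀} := by
      rw [hspan]; exact hAp
    obtain ⟨c, hc⟩ := Submodule.mem_span_singleton.mp hp1mem
    have hsum : (∑ i, udot₀ i * p.1 i) = c * ∑ i, udot₀ i * udot₀ i := by
      rw [← hc, Finset.mul_sum]
      apply Finset.sum_congr rfl
      intro i _
      simp [Pi.smul_apply]; ring
    have hpos : (0:ℝ) < ∑ i, udot₀ i * udot₀ i := by
      have hne : ∃ i, udot₀ i ≠ 0 := by
        by_contra h
        push_neg at h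
        exact hudot (funext h)
      obtain ⟨i, hi⟩ := hne
      exact Finset.sum_pos' (fun j _ => mul_self_nonneg _)
        ⟨i, Finset.mem_univ i, mul_self_pos.mpr hi⟩
    have hc0 : c = 0 := by
      have : c * ∑ i, udot₀ i * udot₀ i = 0 := by
        rw [← hsum]; simpa using h2
      exact (mul_eq_zero.mp this).resolve_right (ne_of_gt hpos)
    have hp1 : p.1 = 0 := by rw [← hc, hc0, zero_smul]
    exact Prod.ext hp1 ht
  have hsurj : Function.Surjective L :=
    LinearMap.injective_iff_surjective.mp hinj
  exact ⟨hinj, hsurj⟩
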